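/- Suppose Q is a σ-bqo poset and ⟨P_q : q ∈ Q⟩ is a family of σ-bqo posets. Then the lexicographic sum Σ_{q∈Q} P_q is σ-bqo. -/

import Mathlib

universe u v

open Set

/-- `r` is an initial segment of `X ⊆ ℕ`: `r ⊆ X` and every element of `X` not in `r`
is greater than every element of `r`. -/
def NatInitSeg (r : Finset ℕ) (X : Set ℕ) : Prop :=
  ↑r ⊆ X ∧ ∀ x ∈ X, x ∉ r → ∀ y ∈ r, y < x

/-- `B` is a barrier: an infinite inclusion-antichain of finite subsets of `ℕ` such that
every infinite subset of the base has an initial segment in `B`. -/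
def IsBarrier (B : Set (Finset ℕ)) : Prop :=
  B.Infinite ∧
  (∀ x ∈ B, ∀ y ∈ B, x ⊆ y → x = y) ∧
  (∀ X : Set ℕ, X ⊆ (⋃ b ∈ B, (↑b : Set ℕ)) → X.Infinite → ∃ r ∈ B, NatInitSeg r X)

/-- `t` is a proper initial segment of the finite set `s`. -/
def FinsetProperInitSeg (t s : Finset ℕ) : Prop :=
  t ⊆ s ∧ t ≠ s ∧ ∀ x ∈ s, x ∉ t → ∀ y ∈ t, y < x

/-- The shift-extension relation `r ◁ s`: `min r < min s` and `r \ {min r}` is a proper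
initial segment of `s`. -/
def ShiftExt (r s : Finset ℕ) : Prop :=
  ∃ m ∈ r, (∀ x ∈ r, m ≤ x) ∧ (∀ y ∈ s, m < y) ∧ FinsetProperInitSeg (r.erase m) s

/-- A map `f` from a barrier `B` into `X` is good for the relation `le`. -/
def GoodOn {X : Type*} (le : X → X → Prop) (B : Set (Finset ℕ)) (f : Finset ℕ → X) : Prop :=
  ∃ s ∈ B, ∃ t ∈ B, ShiftExt s t ∧ le (f s) (f t)

/-- Well quasi-order for a relation: every `ℕ`-sequence is good. -/
def IsWqoRel {X : Type*} (le : X → X → Prop) : Prop :=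
  ∀ p : ℕ → X, ∃ i j : ℕ, i < j ∧ le (p i) (p j)

/-- Better quasi-order: every map from every barrier is good. -/
def IsBqoRel {X : Type*} (le : X → X → Prop) : Prop :=
  ∀ B : Set (Finset ℕ), IsBarrier B → ∀ f : Finset ℕ → X, GoodOn le B f

/-- The (strict) lexicographic order on finite subsets of `ℕ`:
`r < s` iff `r ≠ s` and the least element of the symmetric difference belongs to `r`. -/
def FinsetLexLt (r s : Finset ℕ) : Prop :=
  r ≠ s ∧ ∀ m ∈ symmDiff r s, (∀ x ∈ symmDiff r s, m ≤ x) → m ∈ r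

/-- The barrier `B` has lexicographic order type `≤ α`: there is a lex-strictly-increasing
ordinal-valued function on `B` bounded by `α`. -/
def BarrierTypeLE (B : Set (Finset ℕ)) (α : Ordinal.{0}) : Prop :=
  ∃ g : Finset ℕ → Ordinal.{0}, (∀ b ∈ B, g b < α) ∧
    ∀ b₁ ∈ B, ∀ b₂ ∈ B, FinsetLexLt b₁ b₂ → g b₁ < g b₂

/-- `α`-wqo: every map from a barrier of order type `≤ α` is good. -/
def IsAlphaWqoRel {X : Type*} (le : X → X → Prop) (α : Ordinal.{0}) : Prop :=
  ∀ B : Set (Finset ℕ), IsBarrier B → BarrierTypeLE B α →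
    ∀ f : Finset ℕ → X, GoodOn le B f

/-- `σ`-bqo: a wqo which is a countable union of sets, each bqo in the induced order. -/
def IsSigmaBqoRel {X : Type*} (le : X → X → Prop) : Prop :=
  IsWqoRel le ∧
  ∃ S : ℕ → Set X, (⋃ n, S n) = Set.univ ∧
    ∀ n, IsBqoRel (fun x y : S n => le x.1 y.1)

/-- Sequences of length `α` from `P`. -/
abbrev OrdSeq (P : Type u) (α : Ordinal.{0}) := {β : Ordinal.{0} // β < α} → P

/-- The embeddability quasi-order on `P^α`. -/
def OrdSeqLE {P : Type u} [Preorder P] {α : Ordinal.{0}} (f g : OrdSeq P α) : Prop :=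
  ∃ ρ : {β : Ordinal.{0} // β < α} → {β : Ordinal.{0} // β < α},
    StrictMono ρ ∧ ∀ γ, f γ ≤ g (ρ γ)

/-- Sequences of length `< α` from `P`. -/
abbrev OrdSeqLt (P : Type u) (α : Ordinal.{0}) :=
  Σ β : {β : Ordinal.{0} // β < α}, ({γ : Ordinal.{0} // γ < β.1} → P)

/-- The embeddability quasi-order on `P^{<α}`. -/
def OrdSeqLtLE {P : Type u} [Preorder P] {α : Ordinal.{0}} (f g : OrdSeqLt P α) : Prop :=
  ∃ ρ : {γ : Ordinal.{0} // γ < f.1.1} → {γ : Ordinal.{0} // γ < g.1.1},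
    StrictMono ρ ∧ ∀ δ, f.2 δ ≤ g.2 (ρ δ)

/-- The Dress–Schiffels relation: `f ≤DS g` iff `f i < g i` for every `i` maximal in
`Δ(f,g) = {j | f j ≠ g j}`. -/
def DSle {I : Type u} [PartialOrder I] {P : I → Type v} [∀ i, PartialOrder (P i)]
    (f g : ∀ i, P i) : Prop :=
  ∀ i : I, Maximal (fun j => f j ≠ g j) i → f i < g i

/-- The underlying set of the Dress–Schiffels product: finitely supported functions. -/
abbrev DSProd (I : Type u) [PartialOrder I] (P : I → Type v) [∀ i, PartialOrder (P i)]
    [∀ i, OrderBot (P i)] :=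
  {f : ∀ i, P i // {i | f i ≠ ⊥}.Finite}

namespace SBQO

open Classical Set

theorem initSeg_comparable {r r' : Finset ℕ} {X : Set ℕ} (h : NatInitSeg r X)
    (h' : NatInitSeg r' X) : r ⊆ r' ∨ r' ⊆ r := by
  by_contra hc
  push_neg at hc
  obtain ⟨a, ha, ha'⟩ := Finset.not_subset.1 hc.1
  obtain ⟨b, hb, hb'⟩ := Finset.not_subset.1 hc.2
  exact lt_asymm (h'.2 a (h.1 ha) ha' b hb) (h.2 b (h'.1 hb) hb' a ha)

theorem initSeg_trans {v r : Finset ℕ} {X : Set ℕ} (hv : NatInitSeg v (↑r))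
    (hr : NatInitSeg r X) : NatInitSeg v X := by
  refine ⟨fun x hx => hr.1 (hv.1 hx), fun x hx hxv y hy => ?_⟩
  by_cases hxr : x ∈ r
  · exact hv.2 x (by exact_mod_cast hxr) hxv y hy
  · exact hr.2 x hx hxr y (hv.1 hy)

theorem initSeg_of_subset {r r' : Finset ℕ} {X : Set ℕ} (h : NatInitSeg r X)
    (h' : NatInitSeg r' X) (hs : r ⊆ r') : NatInitSeg r (↑r') := by
  refine ⟨by exact_mod_cast hs, fun x hx hxr y hy => ?_⟩
  exact h.2 x (h'.1 hx) hxr y hy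

/-- In a barrier, initial segments of a given infinite set are unique. -/
theorem barrier_initSeg_unique {B : Set (Finset ℕ)} (hB : IsBarrier B) {r r' : Finset ℕ}
    {X : Set ℕ} (hr : r ∈ B) (hr' : r' ∈ B) (h : NatInitSeg r X) (h' : NatInitSeg r' X) :
    r = r' := by
  rcases initSeg_comparable h h' with hs | hs
  · exact hB.2.1 r hr r' hr' hs
  · exact (hB.2.1 r' hr' r hr hs).symm

theorem barrier_not_empty_mem {B : Set (Finset ℕ)} (hB : IsBarrier B) : ∅ ∉ B := by
  intro h
  have : B ⊆ {∅} := fun b hb => (hB.2.1 ∅ h b hb (Finset.empty_subset b)) ▸ rfl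
  exact hB.1 ((Set.finite_singleton ∅).subset this)

/-- Restriction of a barrier to an infinite subset of its base is a barrier. -/
theorem barrier_restrict {B : Set (Finset ℕ)} (hB : IsBarrier B) {N : Set ℕ}
    (hN : N ⊆ ⋃ b ∈ B, (↑b : Set ℕ)) (hNinf : N.Infinite) :
    IsBarrier {b ∈ B | ↑b ⊆ N} := by
  have hseg : ∀ X : Set ℕ, X ⊆ N → X.Infinite → ∃ r ∈ {b ∈ B | ↑b ⊆ N}, NatInitSeg r X := by
    intro X hXN hXinf
    obtain ⟨r, hr, hrX⟩ := hB.2.2 X (hXN.trans hN) hXinf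
    exact ⟨r, ⟨hr, hrX.1.trans hXN⟩, hrX⟩
  have hne : ∅ ∉ B := barrier_not_empty_mem hB
  constructor
  · -- infinite
    intro hfin
    have hUfin : (⋃ b ∈ {b ∈ B | ↑b ⊆ N}, (↑b : Set ℕ)).Finite := by
      apply Set.Finite.biUnion hfin
      intro b _; exact b.finite_toSet
    have hX : (N \ ⋃ b ∈ {b ∈ B | ↑b ⊆ N}, (↑b : Set ℕ)).Infinite :=
      hNinf.diff hUfin
    obtain ⟨r, hr, hrX⟩ := hseg _ (Set.diff_subset) hX
    have : r = ∅ := by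
      by_contra hr0
      obtain ⟨x, hx⟩ := Finset.nonempty_iff_ne_empty.2 hr0
      have hx1 : (x : ℕ) ∈ N \ ⋃ b ∈ {b ∈ B | ↑b ⊆ N}, (↑b : Set ℕ) := hrX.1 hx
      exact hx1.2 (Set.mem_biUnion hr (by exact_mod_cast hx))
    exact hne (this ▸ hr.1)
  refine ⟨fun x hx y hy hxy => hB.2.1 x hx.1 y hy.1 hxy, ?_⟩
  intro X hXsub hXinf
  refine hseg X (fun x hx => ?_) hXinf
  obtain ⟨b, hb, hxb⟩ := by
    simpa using hXsub hx
  exact hb.2 hxb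

end SBQO
namespace SBQO

open Classical Set

/-! ### Combinatorial forcing for the Nash–Williams theorem -/

def Accepts (F : Set (Finset ℕ)) (X : Set ℕ) (s : Finset ℕ) : Prop :=
  ∀ Y : Set ℕ, Y ⊆ X → Y.Infinite → ∃ t ∈ F, NatInitSeg t (↑s ∪ Y)

def Rejects (F : Set (Finset ℕ)) (X : Set ℕ) (s : Finset ℕ) : Prop :=
  ∀ Y : Set ℕ, Y ⊆ X → Y.Infinite → ¬ Accepts F Y s

theorem accepts_mono (F : Set (Finset ℕ)) {X X' : Set ℕ} (h : X' ⊆ X) {s : Finset ℕ}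
    (ha : Accepts F X s) : Accepts F X' s := fun Y hY hYi => ha Y (hY.trans h) hYi

theorem rejects_mono (F : Set (Finset ℕ)) {X X' : Set ℕ} (h : X' ⊆ X) {s : Finset ℕ}
    (hr : Rejects F X s) : Rejects F X' s := fun Y hY => hr Y (hY.trans h)

theorem not_accepts_and_rejects (F : Set (Finset ℕ)) {X X' : Set ℕ} (hXi : X.Infinite)
    (h : X ⊆ X') {s : Finset ℕ} (ha : Accepts F X' s) (hr : Rejects F X s) : False :=
  hr X (subset_refl X) hXi (accepts_mono F h ha)

theorem exists_decided (F : Set (Finset ℕ)) (X : Set ℕ) (hX : X.Infinite) (s : Finset ℕ) :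
    ∃ X', X' ⊆ X ∧ X'.Infinite ∧ (Accepts F X' s ∨ Rejects F X' s) := by
  by_cases h : Rejects F X s
  · exact ⟨X, subset_refl X, hX, Or.inr h⟩
  · simp only [Rejects, not_forall] at h
    obtain ⟨Y, hYX, hYi, hYa⟩ := h
    exact ⟨Y, hYX, hYi, Or.inl (not_not.1 hYa)⟩

theorem exists_decided_many (F : Set (Finset ℕ)) (S : Finset (Finset ℕ)) (X : Set ℕ)
    (hX : X.Infinite) :
    ∃ X', X' ⊆ X ∧ X'.Infinite ∧ ∀ s ∈ S, Accepts F X' s ∨ Rejects F X' s := by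
  induction S using Finset.induction_on with
  | empty => exact ⟨X, subset_refl X, hX, by simp⟩
  | @insert a S _ ih =>
    obtain ⟨X1, h1, h1i, h1d⟩ := ih
    obtain ⟨X2, h2, h2i, h2d⟩ := exists_decided F X1 h1i a
    refine ⟨X2, h2.trans h1, h2i, fun s hs => ?_⟩
    rcases Finset.mem_insert.1 hs with rfl | hs
    · exact h2d
    · rcases h1d s hs with h | h
      · exact Or.inl (accepts_mono F h2 h)
      · exact Or.inr (rejects_mono F h2 h)

def Inv (F : Set (Finset ℕ)) (M : Set ℕ) (p : Finset ℕ × Set ℕ) : Prop :=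
  p.2.Infinite ∧ p.2 ⊆ M ∧ (↑p.1 : Set ℕ) ⊆ M ∧ (∀ x ∈ p.2, ∀ l ∈ p.1, l < x) ∧
    (∀ s ∈ p.1.powerset, Accepts F p.2 s ∨ Rejects F p.2 s)

theorem fusion_init (F : Set (Finset ℕ)) (M : Set ℕ) :
    ∃ X : Set ℕ, M.Infinite → Inv F M ((∅ : Finset ℕ), X) := by
  by_cases hM : M.Infinite
  · obtain ⟨X, hXM, hXi, hXd⟩ := exists_decided F M hM ∅
    refine ⟨X, fun _ => ⟨hXi, hXM, by simp, by simp, fun s hs => ?_⟩⟩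
    simp only [Finset.powerset_empty, Finset.mem_singleton] at hs
    subst hs; exact hXd
  · exact ⟨∅, fun h => absurd h hM⟩

theorem fusion_step (F : Set (Finset ℕ)) (M : Set ℕ) (p : Finset ℕ × Set ℕ) :
    ∃ q : ℕ × Set ℕ, Inv F M p →
      (q.1 ∈ p.2 ∧ q.2 ⊆ p.2 ∧ (∀ x ∈ q.2, q.1 < x) ∧
        Inv F M (insert q.1 p.1, q.2)) := by
  by_cases h : Inv F M p
  · have hne : p.2.Nonempty := h.1.nonempty
    set n := sInf p.2 with hn
    have hnmem : n ∈ p.2 := Nat.sInf_mem hne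
    have hX0 : ({x ∈ p.2 | n < x} : Set ℕ).Infinite := by
      have : ({x ∈ p.2 | n < x} : Set ℕ) = p.2 \ {x | x ≤ n} := by
        ext x; simp [Set.mem_diff, and_comm, not_le]
      rw [this]
      exact h.1.diff (Set.finite_Iic n)
    obtain ⟨X', hX'sub, hX'i, hX'd⟩ :=
      exists_decided_many F ((insert n p.1).powerset) {x ∈ p.2 | n < x} hX0
    have hX'p : X' ⊆ p.2 := hX'sub.trans (fun x hx => hx.1)
    refine ⟨(n, X'), fun _ => ⟨hnmem, hX'p, fun x hx => (hX'sub hx).2, ?_⟩⟩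
    refine ⟨hX'i, hX'p.trans h.2.1, ?_, ?_, ?_⟩
    · rw [Finset.coe_insert]
      exact Set.insert_subset (h.2.1 hnmem) h.2.2.1
    · intro x hx l hl
      rcases Finset.mem_insert.1 hl with rfl | hl
      · exact (hX'sub hx).2
      · exact h.2.2.2.1 x (hX'p hx) l hl
    · exact hX'd
  · exact ⟨(0, ∅), fun hc => absurd hc h⟩

noncomputable def fstep (F : Set (Finset ℕ)) (M : Set ℕ) (p : Finset ℕ × Set ℕ) : ℕ × Set ℕ :=
  choose (fusion_step F M p)

noncomputable def fus (F : Set (Finset ℕ)) (M : Set ℕ) : ℕ → Finset ℕ × Set ℕ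
  | 0 => ((∅ : Finset ℕ), choose (fusion_init F M))
  | i + 1 => (insert (fstep F M (fus F M i)).1 (fus F M i).1, (fstep F M (fus F M i)).2)

end SBQO
namespace SBQO

open Classical Set

section Fusion

variable (F : Set (Finset ℕ)) (M : Set ℕ) (hM : M.Infinite)
include hM

theorem fus_inv : ∀ i, Inv F M (fus F M i) := by
  intro i
  induction i with
  | zero => exact choose_spec (fusion_init F M) hM
  | succ i ih => exact (choose_spec (fusion_step F M (fus F M i)) ih).2.2.2

theorem fstep_spec (i : ℕ) :
    (fstep F M (fus F M i)).1 ∈ (fus F M i).2 ∧ (fstep F M (fus F M i)).2 ⊆ (fus F M i).2 ∧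
      (∀ x ∈ (fstep F M (fus F M i)).2, (fstep F M (fus F M i)).1 < x) := by
  have h := choose_spec (fusion_step F M (fus F M i)) (fus_inv F M hM i)
  exact ⟨h.1, h.2.1, h.2.2.1⟩

/-- the `i`-th chosen element -/
noncomputable def fel (i : ℕ) : ℕ := (fstep F M (fus F M i)).1

theorem fus_succ_fst (i : ℕ) : (fus F M (i + 1)).1 = insert (fel F M i) (fus F M i).1 := rfl

theorem fus_succ_snd (i : ℕ) : (fus F M (i + 1)).2 = (fstep F M (fus F M i)).2 := rfl

theorem fus_X_antitone : ∀ {i j : ℕ}, i ≤ j → (fus F M j).2 ⊆ (fus F M i).2 := by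
  intro i j h
  induction j with
  | zero => cases Nat.le_zero.1 h; exact subset_refl _
  | succ j ih =>
    rcases Nat.lt_or_ge i (j+1) with hlt | hge
    · exact ((fstep_spec F M hM j).2.1).trans (ih (Nat.lt_succ_iff.1 hlt))
    · cases le_antisymm h hge; exact subset_refl _

theorem fus_L_mono : ∀ {i j : ℕ}, i ≤ j → (fus F M i).1 ⊆ (fus F M j).1 := by
  intro i j h
  induction j with
  | zero => cases Nat.le_zero.1 h; exact subset_refl _
  | succ j ih =>
    rcases Nat.lt_or_ge i (j+1) with hlt | hge
    · exact (ih (Nat.lt_succ_iff.1 hlt)).trans (by rw [fus_succ_fst F M hM]; exact Finset.subset_insert _ _)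
    · cases le_antisymm h hge; exact subset_refl _

theorem fel_mem_X (i : ℕ) : fel F M i ∈ (fus F M i).2 := (fstep_spec F M hM i).1

theorem fel_strictMono : StrictMono (fel F M) := by
  have step : ∀ i j, i < j → fel F M i < fel F M j := by
    intro i j hij
    have h1 : fel F M j ∈ (fus F M (i+1)).2 :=
      fus_X_antitone F M hM hij (fel_mem_X F M hM j)
    rw [fus_succ_snd F M hM] at h1
    exact (fstep_spec F M hM i).2.2 _ h1
  exact fun i j h => step i j h

theorem mem_fus_L_iff (i : ℕ) (x : ℕ) :
    x ∈ (fus F M i).1 ↔ ∃ k < i, x = fel F M k := by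
  induction i with
  | zero =>
    show x ∈ (∅ : Finset ℕ) ↔ _
    simp
  | succ i ih =>
    rw [fus_succ_fst F M hM, Finset.mem_insert, ih]
    constructor
    · rintro (rfl | ⟨k, hk, rfl⟩)
      · exact ⟨i, Nat.lt_succ_self i, rfl⟩
      · exact ⟨k, hk.trans (Nat.lt_succ_self i), rfl⟩
    · rintro ⟨k, hk, rfl⟩
      rcases Nat.lt_succ_iff_lt_or_eq.1 hk with hk | rfl
      · exact Or.inr ⟨k, hk, rfl⟩
      · exact Or.inl rfl

/-- The first fusion set: range of the chosen elements. -/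
noncomputable def Nstar : Set ℕ := Set.range (fel F M)

theorem Nstar_infinite : (Nstar F M).Infinite :=
  Set.infinite_range_of_injective (fel_strictMono F M hM).injective

theorem Nstar_subset_M : Nstar F M ⊆ M := by
  rintro x ⟨i, rfl⟩
  exact (fus_inv F M hM i).2.1 (fel_mem_X F M hM i)

theorem finset_subset_L {s : Finset ℕ} (hs : ↑s ⊆ Nstar F M) :
    ∃ j, s ⊆ (fus F M j).1 := by
  induction s using Finset.induction_on with
  | empty => exact ⟨0, Finset.empty_subset _⟩
  | @insert a s _ ih =>
    have hsub : ↑s ⊆ Nstar F M := by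
      refine subset_trans ?_ hs
      exact_mod_cast Finset.coe_subset.2 (Finset.subset_insert a s)
    obtain ⟨j, hj⟩ := ih hsub
    have ha : a ∈ Nstar F M := hs (by exact_mod_cast Finset.mem_insert_self a s)
    obtain ⟨k, hk⟩ := ha
    refine ⟨max j (k+1), Finset.insert_subset ?_ (hj.trans (fus_L_mono F M hM (le_max_left _ _)))⟩
    rw [mem_fus_L_iff F M hM]
    exact ⟨k, lt_of_lt_of_le (Nat.lt_succ_self k) (le_max_right j (k+1)), hk.symm⟩

/-- elements of `Nstar` not in `L i` lie in `X i` -/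
theorem mem_X_of_not_mem_L {i : ℕ} {x : ℕ} (hx : x ∈ Nstar F M)
    (hxL : x ∉ (fus F M i).1) : x ∈ (fus F M i).2 := by
  obtain ⟨k, rfl⟩ := hx
  rcases Nat.lt_or_ge k i with hk | hk
  · exact absurd ((mem_fus_L_iff F M hM i _).2 ⟨k, hk, rfl⟩) hxL
  · exact fus_X_antitone F M hM hk (fel_mem_X F M hM k)

/-- `Nstar`-elements above `fel k` lie in `X (k+1)` -/
theorem gt_mem_X {k : ℕ} {y : ℕ} (hy : y ∈ Nstar F M) (h : fel F M k < y) :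
    y ∈ (fus F M (k + 1)).2 := by
  obtain ⟨j, rfl⟩ := hy
  have hkj : k < j := by
    by_contra hc
    exact absurd h (not_lt.2 ((fel_strictMono F M hM).monotone (not_lt.1 hc)))
  exact fus_X_antitone F M hM hkj (fel_mem_X F M hM j)

/-- definitive acceptance / rejection -/
def Acc2 (i : ℕ) (s : Finset ℕ) : Prop := s ⊆ (fus F M i).1 ∧ Accepts F (fus F M i).2 s
def Rej2 (i : ℕ) (s : Finset ℕ) : Prop := s ⊆ (fus F M i).1 ∧ Rejects F (fus F M i).2 s

theorem not_acc_and_rej {i j : ℕ} {s : Finset ℕ} (ha : Acc2 F M i s) (hr : Rej2 F M j s) :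
    False := by
  have h1 : (fus F M (max i j)).2 ⊆ (fus F M i).2 := fus_X_antitone F M hM (le_max_left _ _)
  have h2 : (fus F M (max i j)).2 ⊆ (fus F M j).2 := fus_X_antitone F M hM (le_max_right _ _)
  exact not_accepts_and_rejects F (fus_inv F M hM (max i j)).1 h1 ha.2 (rejects_mono F h2 hr.2)

theorem acc_or_rej {j : ℕ} {s : Finset ℕ} (hs : s ⊆ (fus F M j).1) :
    Acc2 F M j s ∨ Rej2 F M j s := by
  rcases (fus_inv F M hM j).2.2.2.2 s (Finset.mem_powerset.2 hs) with h | h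
  · exact Or.inl ⟨hs, h⟩
  · exact Or.inr ⟨hs, h⟩

theorem acc_at {j : ℕ} {s : Finset ℕ} (ha : ∃ k, Acc2 F M k s)
    (hs : s ⊆ (fus F M j).1) : Accepts F (fus F M j).2 s := by
  obtain ⟨k, hk⟩ := ha
  rcases acc_or_rej F M hM hs with h | h
  · exact h.2
  · exact absurd (not_acc_and_rej F M hM hk h) (by simp)

theorem rej_at {j : ℕ} {s : Finset ℕ} (hr : ∃ k, Rej2 F M k s)
    (hs : s ⊆ (fus F M j).1) : Rejects F (fus F M j).2 s := by
  obtain ⟨k, hk⟩ := hr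
  rcases acc_or_rej F M hM hs with h | h
  · exact absurd (not_acc_and_rej F M hM h hk) (by simp)
  · exact h.2

end Fusion

end SBQO
namespace SBQO

open Classical Set

section Fusion2

variable (F : Set (Finset ℕ)) (M : Set ℕ) (hM : M.Infinite)
include hM

/-- the "bad extension" set -/
def Zset (s : Finset ℕ) : Set ℕ :=
  {x : ℕ | x ∈ Nstar F M ∧ (∀ l ∈ s, l < x) ∧ ∃ k, Acc2 F M k (insert x s)}

omit hM in
theorem mem_nstar_lt {x y : ℕ} (hx : x ∈ Nstar F M) (hy : y ∈ Nstar F M) {k : ℕ}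
    (hxk : x = fel F M k) (h : y < x) (hMi : M.Infinite) : y ∈ (fus F M (k+1)).1 := by
  obtain ⟨m, rfl⟩ := hy
  rw [mem_fus_L_iff F M hMi]
  refine ⟨m, ?_, rfl⟩
  have : fel F M m < fel F M k := hxk ▸ h
  exact Nat.lt_succ_of_lt ((fel_strictMono F M hMi).lt_iff_lt.1 this)

theorem Zset_finite {s : Finset ℕ} (hs : ↑s ⊆ Nstar F M) (hr : ∃ k, Rej2 F M k s) :
    (Zset F M s).Finite := by
  by_contra hfin
  have hinf : (Zset F M s).Infinite := hfin
  obtain ⟨j, hj⟩ := finset_subset_L F M hM hs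
  have hRj : Rejects F (fus F M j).2 s := rej_at F M hM hr hj
  set Z' : Set ℕ := Zset F M s \ ↑(fus F M j).1 with hZ'
  have hZ'i : Z'.Infinite := hinf.diff (fus F M j).1.finite_toSet
  have hZ'X : Z' ⊆ (fus F M j).2 := fun x hx =>
    mem_X_of_not_mem_L F M hM hx.1.1 (by exact_mod_cast hx.2)
  have hacc : Accepts F Z' s := by
    intro Y hYZ hYi
    have hYne : Y.Nonempty := hYi.nonempty
    set x := sInf Y with hxdef
    have hxY : x ∈ Y := Nat.sInf_mem hYne
    have hxZ : x ∈ Zset F M s := (hYZ hxY).1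
    obtain ⟨k, hk⟩ := hxZ.1
    have hsubL : insert x s ⊆ (fus F M (k+1)).1 := by
      intro l hl
      rcases Finset.mem_insert.1 hl with rfl | hl
      · rw [mem_fus_L_iff F M hM]; exact ⟨k, Nat.lt_succ_self k, hk.symm⟩
      · exact mem_nstar_lt F M (hxZ.1) (hs hl) hk.symm (hxZ.2.1 l hl) hM
    have haccx : Accepts F (fus F M (k+1)).2 (insert x s) :=
      acc_at F M hM hxZ.2.2 hsubL
    set Y' := Y \ {x} with hY'
    have hY'i : Y'.Infinite := hYi.diff (Set.finite_singleton x)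
    have hY'sub : Y' ⊆ (fus F M (k+1)).2 := by
      intro y hy
      have hyN : y ∈ Nstar F M := (hYZ hy.1).1.1
      have hxy : x < y := lt_of_le_of_ne (Nat.sInf_le hy.1) (fun h => hy.2 h.symm)
      exact gt_mem_X F M hM hyN (hk ▸ hxy)
    obtain ⟨t, htF, htseg⟩ := haccx Y' hY'sub hY'i
    refine ⟨t, htF, ?_⟩
    have heq : (↑(insert x s) : Set ℕ) ∪ Y' = ↑s ∪ Y := by
      ext z
      simp only [Finset.coe_insert, Set.mem_union, Set.mem_insert_iff, Set.mem_diff,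
        Set.mem_singleton_iff, Finset.mem_coe]
      constructor
      · rintro ((rfl | hz) | ⟨hz, _⟩)
        · exact Or.inr hxY
        · exact Or.inl hz
        · exact Or.inr hz
      · rintro (hz | hz)
        · exact Or.inl (Or.inr hz)
        · by_cases hzx : z = x
          · exact Or.inl (Or.inl hzx)
          · exact Or.inr ⟨hz, hzx⟩
    rwa [heq] at htseg
  exact hRj Z' hZ'X hZ'i hacc

theorem fusion2_step (K : Finset ℕ) :
    ∃ x : ℕ, (↑K ⊆ Nstar F M ∧ (∀ s ∈ K.powerset, ∃ k, Rej2 F M k s)) →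
      (x ∈ Nstar F M ∧ (∀ l ∈ K, l < x) ∧ (↑(insert x K) : Set ℕ) ⊆ Nstar F M ∧
        ∀ s ∈ (insert x K).powerset, ∃ k, Rej2 F M k s) := by
  by_cases hK : ↑K ⊆ Nstar F M ∧ (∀ s ∈ K.powerset, ∃ k, Rej2 F M k s)
  · have hbad : (⋃ s ∈ K.powerset, Zset F M s).Finite := by
      apply Set.Finite.biUnion (K.powerset.finite_toSet)
      intro s hs
      have hsK := Finset.mem_powerset.1 (by exact_mod_cast hs)
      exact Zset_finite F M hM ((Finset.coe_subset.2 hsK).trans hK.1) (hK.2 s (by exact_mod_cast hs))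
    have hrem : (Nstar F M \ ((⋃ s ∈ K.powerset, Zset F M s) ∪ {y | y ≤ K.sup id})).Infinite :=
      (Nstar_infinite F M hM).diff (hbad.union (Set.finite_Iic (K.sup id)))
    obtain ⟨x, hx⟩ := hrem.nonempty
    have hxN : x ∈ Nstar F M := hx.1
    have hxgt : ∀ l ∈ K, l < x := by
      intro l hl
      have h1 : ¬ x ≤ K.sup id := fun h => hx.2 (Or.inr h)
      exact lt_of_le_of_lt (Finset.le_sup (f := id) hl) (not_le.1 h1)
    refine ⟨x, fun _ => ⟨hxN, hxgt, ?_, ?_⟩⟩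
    · rw [Finset.coe_insert]
      exact Set.insert_subset hxN hK.1
    · intro s' hs'
      have hs'sub := Finset.mem_powerset.1 hs'
      by_cases hxs : x ∈ s'
      · set s := s'.erase x with hsdef
        have hsK : s ⊆ K := by
          intro y hy
          have h1 := hs'sub (Finset.mem_of_mem_erase hy)
          rcases Finset.mem_insert.1 h1 with rfl | h
          · exact absurd rfl (Finset.ne_of_mem_erase hy)
          · exact h
        have hins : insert x s = s' := Finset.insert_erase hxs
        have hsN : ↑(insert x s) ⊆ Nstar F M := by
          rw [hins]; exact (Finset.coe_subset.2 hs'sub).trans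
            (by rw [Finset.coe_insert]; exact Set.insert_subset hxN hK.1)
        obtain ⟨j, hj⟩ := finset_subset_L F M hM hsN
        rcases acc_or_rej F M hM hj with hA | hR
        · exfalso
          have hxZ : x ∈ Zset F M s :=
            ⟨hxN, fun l hl => hxgt l (hsK hl), ⟨j, hA⟩⟩
          exact hx.2 (Or.inl (Set.mem_biUnion (by exact_mod_cast Finset.mem_powerset.2 hsK) hxZ))
        · exact hins ▸ ⟨j, hR⟩
      · have : s' ⊆ K := fun y hy => by
          rcases Finset.mem_insert.1 (hs'sub hy) with rfl | h
          · exact absurd hy hxs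
          · exact h
        exact hK.2 s' (Finset.mem_powerset.2 this)
  · exact ⟨0, fun hc => absurd hc hK⟩

end Fusion2

end SBQO
namespace SBQO

open Classical Set

noncomputable def f2el (F : Set (Finset ℕ)) (M : Set ℕ) (hM : M.Infinite) (K : Finset ℕ) : ℕ :=
  choose (fusion2_step F M hM K)

noncomputable def fus2 (F : Set (Finset ℕ)) (M : Set ℕ) (hM : M.Infinite) : ℕ → Finset ℕ
  | 0 => ∅
  | i + 1 => insert (f2el F M hM (fus2 F M hM i)) (fus2 F M hM i)

section NW

variable (F : Set (Finset ℕ)) (M : Set ℕ) (hM : M.Infinite)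
  (hrej : ∃ k, Rej2 F M k (∅ : Finset ℕ))
include hM hrej

theorem fus2_inv : ∀ i, ↑(fus2 F M hM i) ⊆ Nstar F M ∧
    ∀ s ∈ (fus2 F M hM i).powerset, ∃ k, Rej2 F M k s := by
  intro i
  induction i with
  | zero =>
    refine ⟨by simp [fus2], fun s hs => ?_⟩
    simp only [fus2, Finset.powerset_empty, Finset.mem_singleton] at hs
    subst hs; exact hrej
  | succ i ih =>
    have h := choose_spec (fusion2_step F M hM (fus2 F M hM i))
      ⟨ih.1, ih.2⟩
    exact ⟨h.2.2.1, h.2.2.2⟩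

theorem fus2_spec (i : ℕ) :
    f2el F M hM (fus2 F M hM i) ∈ Nstar F M ∧
      ∀ l ∈ fus2 F M hM i, l < f2el F M hM (fus2 F M hM i) := by
  have h := choose_spec (fusion2_step F M hM (fus2 F M hM i)) (fus2_inv F M hM hrej i)
  exact ⟨h.1, h.2.1⟩

theorem fus2_mono : ∀ {i j : ℕ}, i ≤ j → fus2 F M hM i ⊆ fus2 F M hM j := by
  intro i j h
  induction j with
  | zero => cases Nat.le_zero.1 h; exact subset_refl _
  | succ j ih =>
    rcases Nat.lt_or_ge i (j+1) with hlt | hge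
    · exact (ih (Nat.lt_succ_iff.1 hlt)).trans (Finset.subset_insert _ _)
    · cases le_antisymm h hge; exact subset_refl _

noncomputable def Nss : Set ℕ := {x : ℕ | ∃ i, x ∈ fus2 F M hM i}

theorem Nss_subset : Nss F M hM ⊆ Nstar F M := by
  rintro x ⟨i, hi⟩
  exact (fus2_inv F M hM hrej i).1 hi

theorem Nss_infinite : (Nss F M hM).Infinite := by
  have hmem : ∀ i, f2el F M hM (fus2 F M hM i) ∈ Nss F M hM := by
    intro i
    exact ⟨i + 1, by simp [fus2, Finset.mem_insert_self]⟩
  have hsm : StrictMono (fun i => f2el F M hM (fus2 F M hM i)) := by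
    have step : ∀ i, f2el F M hM (fus2 F M hM i) < f2el F M hM (fus2 F M hM (i+1)) := by
      intro i
      exact (fus2_spec F M hM hrej (i+1)).2 _ (by simp [fus2, Finset.mem_insert_self])
    exact strictMono_nat_of_lt_succ step
  exact Set.infinite_of_injective_forall_mem (f := fun i => f2el F M hM (fus2 F M hM i))
    hsm.injective hmem

theorem finset_subset_fus2 {s : Finset ℕ} (hs : ↑s ⊆ Nss F M hM) :
    ∃ j, s ⊆ fus2 F M hM j := by
  induction s using Finset.induction_on with
  | empty => exact ⟨0, Finset.empty_subset _⟩
  | @insert a s _ ih =>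
    have hsub : ↑s ⊆ Nss F M hM :=
      subset_trans (by exact_mod_cast Finset.coe_subset.2 (Finset.subset_insert a s)) hs
    obtain ⟨j, hj⟩ := ih hsub
    obtain ⟨k, hk⟩ := hs (by exact_mod_cast Finset.mem_insert_self a s)
    exact ⟨max j k, Finset.insert_subset
      (fus2_mono F M hM hrej (le_max_right j k) hk)
      (hj.trans (fus2_mono F M hM hrej (le_max_left j k)))⟩

end NW

/-- The Nash–Williams combinatorial lemma. -/
theorem nashWilliams (F : Set (Finset ℕ)) (M : Set ℕ) (hM : M.Infinite) :
    ∃ N : Set ℕ, N ⊆ M ∧ N.Infinite ∧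
      ((∀ X : Set ℕ, X ⊆ N → X.Infinite → ∃ r ∈ F, NatInitSeg r X) ∨
        (∀ r ∈ F, ¬ (↑r : Set ℕ) ⊆ N)) := by
  rcases acc_or_rej F M hM (j := 0) (s := ∅) (Finset.empty_subset _) with hA | hR
  · refine ⟨Nstar F M, Nstar_subset_M F M hM, Nstar_infinite F M hM, Or.inl ?_⟩
    intro X hXN hXi
    have hX0 : X ⊆ (fus F M 0).2 := by
      intro x hx
      exact mem_X_of_not_mem_L F M hM (hXN hx) (by simp [fus])
    obtain ⟨t, htF, htseg⟩ := hA.2 X hX0 hXi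
    refine ⟨t, htF, ?_⟩
    rwa [Finset.coe_empty, Set.empty_union] at htseg
  · have hrej : ∃ k, Rej2 F M k (∅ : Finset ℕ) := ⟨0, hR⟩
    refine ⟨Nss F M hM, (Nss_subset F M hM hrej).trans (Nstar_subset_M F M hM),
      Nss_infinite F M hM hrej, Or.inr ?_⟩
    intro r hrF hrN
    have hrN' : ↑r ⊆ Nstar F M := hrN.trans (Nss_subset F M hM hrej)
    obtain ⟨j2, hj2⟩ := finset_subset_fus2 F M hM hrej hrN
    have hRk : ∃ k, Rej2 F M k r := (fus2_inv F M hM hrej j2).2 r (Finset.mem_powerset.2 hj2)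
    obtain ⟨j, hj⟩ := finset_subset_L F M hM hrN'
    have hRj : Rejects F (fus F M j).2 r := rej_at F M hM hRk hj
    have hAj : Accepts F (fus F M j).2 r := by
      intro Y hY hYi
      refine ⟨r, hrF, Set.subset_union_left, ?_⟩
      intro x hx hxr y hy
      rcases hx with hx | hx
      · exact absurd (by exact_mod_cast hx) hxr
      · exact (fus_inv F M hM j).2.2.2.1 x (hY hx) y (hj hy)
    exact hRj (fus F M j).2 (subset_refl _) (fus_inv F M hM j).1 hAj

end SBQO
namespace SBQO

open Classical Set

def IsThin (D : Set (Finset ℕ)) : Prop :=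
  ∀ u ∈ D, ∀ v ∈ D, NatInitSeg u ↑v → u = v

def IsFrontOn (D : Set (Finset ℕ)) (N : Set ℕ) : Prop :=
  (∀ u ∈ D, ↑u ⊆ N) ∧ IsThin D ∧
    ∀ X : Set ℕ, X ⊆ N → X.Infinite → ∃ u ∈ D, NatInitSeg u X

theorem tail_infinite {N : Set ℕ} (hN : N.Infinite) (u : Finset ℕ) :
    ({n ∈ N | ∀ y ∈ u, y < n} : Set ℕ).Infinite := by
  refine Set.Infinite.mono (fun n hn => ?_) (hN.diff (Set.finite_Iic (u.sup id)))
  exact ⟨hn.1, fun y hy => lt_of_le_of_lt (Finset.le_sup (f := id) hy) (not_le.1 hn.2)⟩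

theorem self_initSeg_tail {N : Set ℕ} (u : Finset ℕ) :
    NatInitSeg u (↑u ∪ {n ∈ N | ∀ y ∈ u, y < n}) := by
  refine ⟨Set.subset_union_left, fun x hx hxu y hy => ?_⟩
  rcases hx with hx | hx
  · exact absurd (by exact_mod_cast hx) hxu
  · exact hx.2 y hy

theorem front_partition {D : Set (Finset ℕ)} {N : Set ℕ} (hD : IsFrontOn D N)
    (hN : N.Infinite) (D₀ : Set (Finset ℕ)) (hD₀ : D₀ ⊆ D) :
    ∃ N' : Set ℕ, N' ⊆ N ∧ N'.Infinite ∧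
      ((∀ u ∈ D, ↑u ⊆ N' → u ∈ D₀) ∨ (∀ u ∈ D, ↑u ⊆ N' → u ∉ D₀)) := by
  obtain ⟨N', hN'N, hN'i, hcase⟩ := nashWilliams D₀ N hN
  refine ⟨N', hN'N, hN'i, ?_⟩
  rcases hcase with hcase | hcase
  · left
    intro u hu huN'
    set X : Set ℕ := ↑u ∪ {n ∈ N' | ∀ y ∈ u, y < n} with hX
    have hXN' : X ⊆ N' := Set.union_subset huN' (fun n hn => hn.1)
    have hXi : X.Infinite := Set.Infinite.mono Set.subset_union_right (tail_infinite hN'i u)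
    obtain ⟨r, hrD₀, hrX⟩ := hcase X hXN' hXi
    have huX : NatInitSeg u X := self_initSeg_tail u
    have : r = u := by
      rcases initSeg_comparable hrX huX with hsub | hsub
      · exact hD.2.1 r (hD₀ hrD₀) u hu (initSeg_of_subset hrX huX hsub)
      · exact (hD.2.1 u hu r (hD₀ hrD₀) (initSeg_of_subset huX hrX hsub)).symm
    exact this ▸ hrD₀
  · right
    intro u hu huN' huD₀
    exact hcase u huD₀ huN'

theorem front_to_barrier {D : Set (Finset ℕ)} {N : Set ℕ} (hD : IsFrontOn D N)
    (hN : N.Infinite) (hne : ∅ ∉ D) :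
    ∃ N' : Set ℕ, N' ⊆ N ∧ N'.Infinite ∧
      IsBarrier {u ∈ D | ↑u ⊆ N'} := by
  set D₀ : Set (Finset ℕ) := {u ∈ D | ∃ v ∈ D, v ⊆ u ∧ v ≠ u} with hD₀def
  obtain ⟨N', hN'N, hN'i, hcase⟩ := front_partition hD hN D₀ (fun u hu => hu.1)
  have hfront' : ∀ X : Set ℕ, X ⊆ N' → X.Infinite → ∃ u ∈ {u ∈ D | ↑u ⊆ N'}, NatInitSeg u X := by
    intro X hXN' hXi
    obtain ⟨u, hu, huX⟩ := hD.2.2 X (hXN'.trans hN'N) hXi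
    exact ⟨u, ⟨hu, huX.1.trans hXN'⟩, huX⟩
  rcases hcase with hcase | hcase
  · exfalso
    -- every member of the restriction is non-minimal: contradiction with minimal cardinality
    have hSne : {n | ∃ u ∈ D, ↑u ⊆ N' ∧ u.card = n}.Nonempty := by
      obtain ⟨u, hu, _⟩ := hfront' N' (subset_refl _) hN'i
      exact ⟨u.card, u, hu.1, hu.2, rfl⟩
    obtain ⟨u, huD, huN', hucard⟩ := Nat.sInf_mem hSne
    obtain ⟨v, hvD, hvu, hvne⟩ := (hcase u huD huN').2
    have hvN' : ↑v ⊆ N' := (Finset.coe_subset.2 hvu).trans huN'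
    have hvcard : v.card < u.card := Finset.card_lt_card (Finset.ssubset_iff_subset_ne.2 ⟨hvu, hvne⟩)
    have hle : sInf {n | ∃ u ∈ D, ↑u ⊆ N' ∧ u.card = n} ≤ v.card := Nat.sInf_le ⟨v, hvD, hvN', rfl⟩
    omega
  · refine ⟨N', hN'N, hN'i, ?_, ?_, ?_⟩
    · -- infinite
      intro hfin
      have hUfin : (⋃ b ∈ {u ∈ D | ↑u ⊆ N'}, (↑b : Set ℕ)).Finite :=
        Set.Finite.biUnion hfin (fun b _ => b.finite_toSet)
      have hXi : (N' \ ⋃ b ∈ {u ∈ D | ↑u ⊆ N'}, (↑b : Set ℕ)).Infinite := hN'i.diff hUfin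
      obtain ⟨r, hr, hrX⟩ := hfront' _ Set.diff_subset hXi
      have : r = ∅ := by
        by_contra hr0
        obtain ⟨x, hx⟩ := Finset.nonempty_iff_ne_empty.2 hr0
        exact (hrX.1 hx).2 (Set.mem_biUnion hr (by exact_mod_cast hx))
      exact hne (this ▸ hr.1)
    · -- antichain
      intro x hx y hy hxy
      by_contra hne'
      exact hcase y hy.1 hy.2 ⟨hy.1, x, hx.1, hxy, hne'⟩
    · intro X hXsub hXinf
      refine hfront' X (fun x hx => ?_) hXinf
      obtain ⟨b, hb, hxb⟩ := by simpa using hXsub hx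
      exact hb.2 hxb

end SBQO
namespace SBQO

open Classical Set

theorem shiftExt_min_unique {s t : Finset ℕ} (hst : ShiftExt s t) {m' : ℕ}
    (hm' : m' ∈ s) (hmin : ∀ x ∈ s, m' ≤ x) :
    ∃ m ∈ s, m = m' ∧ (∀ x ∈ s, m ≤ x) ∧ (∀ y ∈ t, m < y) ∧
      FinsetProperInitSeg (s.erase m) t := by
  obtain ⟨m, hm, hmin2, hlt, hseg⟩ := hst
  exact ⟨m, hm, le_antisymm (hmin2 m' hm') (hmin m hm), hmin2, hlt, hseg⟩

theorem shiftExt_union_min {s t : Finset ℕ} (hst : ShiftExt s t) :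
    ∃ m ∈ s, (∀ x ∈ s ∪ t, m ≤ x) ∧ (s ∪ t).erase m = t ∧
      (∀ y ∈ t, m < y) ∧ FinsetProperInitSeg (s.erase m) t := by
  obtain ⟨m, hm, hmin, hlt, hseg⟩ := hst
  refine ⟨m, hm, ?_, ?_, hlt, hseg⟩
  · intro x hx
    rcases Finset.mem_union.1 hx with hx | hx
    · exact hmin x hx
    · exact le_of_lt (hlt x hx)
  · ext x
    simp only [Finset.mem_erase, Finset.mem_union]
    constructor
    · rintro ⟨hxm, hx | hx⟩
      · exact hseg.1 (Finset.mem_erase.2 ⟨hxm, hx⟩)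
      · exact hx
    · intro hx
      exact ⟨ne_of_gt (hlt x hx), Or.inr hx⟩

/-- `s` is an initial segment of `s ∪ t` when `s ◁ t`. -/
theorem shiftExt_left_initSeg {s t : Finset ℕ} (hst : ShiftExt s t) :
    NatInitSeg s ↑(s ∪ t) := by
  obtain ⟨m, hm, hmin, hlt, hseg⟩ := hst
  refine ⟨by exact_mod_cast Finset.subset_union_left, ?_⟩
  intro x hx hxs y hy
  have hxt : x ∈ t := by
    rcases Finset.mem_union.1 (by exact_mod_cast hx) with h | h
    · exact absurd h hxs
    · exact h
  by_cases hym : y = m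
  · exact hym ▸ hlt x hxt
  · refine hseg.2.2 x hxt (fun hc => hxs (Finset.mem_of_mem_erase hc)) y
      (Finset.mem_erase.2 ⟨hym, hy⟩)

/-- the "square" lemma: if `u = s ∪ t`, `u' = s' ∪ t'` with `s ◁ t`, `s' ◁ t'` in a
barrier `B`, and `u ◁ u'`, then `t = s'`. -/
theorem shift_square {B : Set (Finset ℕ)} (hB : IsBarrier B) {s t s' t' : Finset ℕ}
    (ht : t ∈ B) (hs' : s' ∈ B) (hst : ShiftExt s t) (hs't' : ShiftExt s' t')
    (huu' : ShiftExt (s ∪ t) (s' ∪ t')) : t = s' := by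
  obtain ⟨m, hm, hminU, herase, hltt, hseg⟩ := shiftExt_union_min hst
  -- the witness of huu' equals m
  obtain ⟨m₂, hm₂, hmin₂, hlt₂, hseg₂⟩ := huu'
  have hmm : m₂ = m :=
    le_antisymm (hmin₂ m (Finset.mem_union_left t hm)) (hminU m₂ hm₂)
  subst hmm
  rw [herase] at hseg₂
  -- `t` is an initial segment of `↑(s' ∪ t')`
  have htseg : NatInitSeg t ↑(s' ∪ t') := by
    refine ⟨by exact_mod_cast hseg₂.1, ?_⟩
    intro x hx hxt y hy
    exact hseg₂.2.2 x (by exact_mod_cast hx) hxt y hy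
  have hs'seg : NatInitSeg s' ↑(s' ∪ t') := shiftExt_left_initSeg hs't'
  exact barrier_initSeg_unique hB ht hs' htseg hs'seg

theorem barrier_base_infinite {B : Set (Finset ℕ)} (hB : IsBarrier B) :
    (⋃ b ∈ B, (↑b : Set ℕ)).Infinite := by
  intro hfin
  apply hB.1
  apply Set.Finite.subset (hfin.toFinset.powerset).finite_toSet
  intro b hb
  simp only [Finset.mem_coe, Finset.mem_powerset]
  intro x hx
  exact hfin.mem_toFinset.2 (Set.mem_biUnion hb hx)

/-- A map on a barrier that is constant along `◁` is constant. -/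
theorem barrier_const {B : Set (Finset ℕ)} (hB : IsBarrier B) {Q : Type*}
    (G : Finset ℕ → Q) (hG : ∀ s ∈ B, ∀ t ∈ B, ShiftExt s t → G s = G t) :
    ∀ s ∈ B, ∀ t ∈ B, G s = G t := by
  set Y : Set ℕ := ⋃ b ∈ B, (↑b : Set ℕ) with hY
  have hYinf : Y.Infinite := barrier_base_infinite hB
  -- canonical initial segment
  have hsig : ∀ X : Set ℕ, X ⊆ Y → X.Infinite →
      ∃ r, r ∈ B ∧ NatInitSeg r X ∧ ∀ r' ∈ B, NatInitSeg r' X → r' = r := by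
    intro X hXY hXi
    obtain ⟨r, hr, hrX⟩ := hB.2.2 X hXY hXi
    exact ⟨r, hr, hrX, fun r' hr' hr'X => barrier_initSeg_unique hB hr' hr hr'X hrX⟩
  obtain ⟨σ, hσspec⟩ : ∃ σ : Set ℕ → Finset ℕ, ∀ X : Set ℕ, X ⊆ Y → X.Infinite →
      σ X ∈ B ∧ NatInitSeg (σ X) X ∧ ∀ r' ∈ B, NatInitSeg r' X → r' = σ X := by
    choose g hg1 hg2 hg3 using hsig
    refine ⟨fun X => if h : X ⊆ Y ∧ X.Infinite then g X h.1 h.2 else ∅, fun X hX1 hX2 => ?_⟩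
    simp only []
    rw [dif_pos (⟨hX1, hX2⟩ : X ⊆ Y ∧ X.Infinite)]
    exact ⟨hg1 X _ _, hg2 X _ _, hg3 X _ _⟩
  have hBne : ∀ r ∈ B, r ≠ ∅ := by
    intro r hr h0
    exact barrier_not_empty_mem hB (h0 ▸ hr)
  -- the shift step
  have hstep : ∀ X : Set ℕ, (h1 : X ⊆ Y) → (h2 : X.Infinite) →
      ShiftExt (σ X) (σ (X \ {sInf X})) := by
    intro X h1 h2
    obtain ⟨hsB, hsX, _⟩ := hσspec X h1 h2
    set m := sInf X with hm
    have hX' : (X \ {m}) ⊆ Y := Set.diff_subset.trans h1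
    have hX'i : (X \ {m}).Infinite := h2.diff (Set.finite_singleton m)
    obtain ⟨hs'B, hs'X, hs'uniq⟩ := hσspec _ hX' hX'i
    have hmX : m ∈ X := Nat.sInf_mem h2.nonempty
    have hms : m ∈ σ X := by
      by_contra hms
      obtain ⟨y, hy⟩ := Finset.nonempty_iff_ne_empty.2 (hBne _ hsB)
      have h3 := hsX.2 m hmX hms y hy
      exact absurd (Nat.sInf_le (hsX.1 hy)) (not_le.2 h3)
    have hgtm : ∀ y ∈ σ (X \ {m}), m < y := by
      intro y hy
      have h4 := hs'X.1 hy
      exact lt_of_le_of_ne (Nat.sInf_le h4.1) (fun h => h4.2 h.symm)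
    -- (σ X).erase m and σ (X \ {m}) are both initial segments of X \ {m}
    have heseg : NatInitSeg ((σ X).erase m) (X \ {m}) := by
      constructor
      · intro x hx
        have hx' := Finset.mem_erase.1 (by exact_mod_cast hx)
        exact ⟨hsX.1 (by exact_mod_cast hx'.2), by simpa using hx'.1⟩
      · intro x hx hxe y hy
        have hy' := Finset.mem_erase.1 hy
        have hxs : x ∉ σ X := by
          intro hc
          exact hxe (Finset.mem_erase.2 ⟨fun h => hx.2 (by simpa using h), hc⟩)
        exact hsX.2 x hx.1 hxs y hy'.2
    have hcomp := initSeg_comparable heseg hs'X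
    have hesub : (σ X).erase m ⊆ σ (X \ {m}) := by
      rcases hcomp with h | h
      · exact h
      · -- σ (X \ {m}) ⊆ (σ X).erase m would contradict the antichain property
        have h5 : σ (X \ {m}) ⊆ σ X := h.trans (Finset.erase_subset m (σ X))
        have h6 := hB.2.1 _ hs'B _ hsB h5
        have : m ∈ σ (X \ {m}) := h6 ▸ hms
        exact absurd rfl (ne_of_gt (hgtm m this))
    refine ⟨m, hms, fun x hx => Nat.sInf_le (hsX.1 hx), hgtm, hesub, ?_, ?_⟩
    · intro hc
      have h5 : σ (X \ {m}) ⊆ σ X := hc ▸ Finset.erase_subset m (σ X)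
      have h6 := hB.2.1 _ hs'B _ hsB h5
      have : m ∈ σ (X \ {m}) := h6 ▸ hms
      exact absurd rfl (ne_of_gt (hgtm m this))
    · intro x hx hxe y hy
      exact heseg.2 x (hs'X.1 hx) hxe y hy
  -- iterate the step
  have key : ∀ n : ℕ, ∀ X : Set ℕ, X ⊆ Y → X.Infinite → ∀ a : ℕ,
      (X ∩ {x | x ≤ a}).ncard ≤ n → G (σ X) = G (σ {x ∈ X | a < x}) := by
    intro n
    induction n with
    | zero =>
      intro X h1 h2 a hcard
      have hfin : (X ∩ {x | x ≤ a}).Finite := (Set.finite_Iic a).subset (fun x hx => hx.2)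
      have hempty : X ∩ {x | x ≤ a} = ∅ := by
        rw [← Set.ncard_eq_zero hfin]
        omega
      have : {x ∈ X | a < x} = X := by
        ext x
        simp only [Set.mem_setOf_eq]
        refine ⟨fun h => h.1, fun h => ⟨h, ?_⟩⟩
        by_contra hc
        have hx : x ∈ X ∩ {x | x ≤ a} := ⟨h, not_lt.1 hc⟩
        rw [hempty] at hx
        exact hx
      rw [this]
    | succ n ih =>
      intro X h1 h2 a hcard
      by_cases hem : X ∩ {x | x ≤ a} = ∅
      · have : {x ∈ X | a < x} = X := by
          ext x
          simp only [Set.mem_setOf_eq]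
          refine ⟨fun h => h.1, fun h => ⟨h, ?_⟩⟩
          by_contra hc
          have hx : x ∈ X ∩ {x | x ≤ a} := ⟨h, not_lt.1 hc⟩
          rw [hem] at hx
          exact hx
        rw [this]
      · set m := sInf X with hm
        have hmX : m ∈ X := Nat.sInf_mem h2.nonempty
        obtain ⟨x₀, hx₀⟩ := Set.nonempty_iff_ne_empty.2 hem
        have hma : m ≤ a := le_trans (Nat.sInf_le hx₀.1) hx₀.2
        have hX' : (X \ {m}) ⊆ Y := Set.diff_subset.trans h1
        have hX'i : (X \ {m}).Infinite := h2.diff (Set.finite_singleton m)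
        have hstep1 : G (σ X) = G (σ (X \ {m})) :=
          hG _ (hσspec X h1 h2).1 _ (hσspec _ hX' hX'i).1 (hstep X h1 h2)
        have hseteq : {x ∈ X \ {m} | a < x} = {x ∈ X | a < x} := by
          ext x
          simp only [Set.mem_setOf_eq, Set.mem_diff, Set.mem_singleton_iff]
          constructor
          · rintro ⟨⟨h3, _⟩, h4⟩; exact ⟨h3, h4⟩
          · rintro ⟨h3, h4⟩
            exact ⟨⟨h3, fun h => absurd (h ▸ h4) (not_lt.2 hma)⟩, h4⟩
        have hcard' : ((X \ {m}) ∩ {x | x ≤ a}).ncard ≤ n := by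
          have hfin : (X ∩ {x | x ≤ a}).Finite := (Set.finite_Iic a).subset (fun x hx => hx.2)
          have heq2 : (X \ {m}) ∩ {x | x ≤ a} = (X ∩ {x | x ≤ a}) \ {m} := by
            ext x
            simp only [Set.mem_inter_iff, Set.mem_diff, Set.mem_singleton_iff, Set.mem_setOf_eq]
            tauto
          rw [heq2]
          have hmem : m ∈ X ∩ {x | x ≤ a} := ⟨hmX, hma⟩
          have := Set.ncard_diff_singleton_lt_of_mem hmem hfin
          omega
        rw [hstep1, ih (X \ {m}) hX' hX'i a hcard', hseteq]
  -- conclude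
  intro s hs t ht
  set a : ℕ := (s ∪ t).sup id with ha
  have hbound : ∀ u : Finset ℕ, u ∈ B → (∀ z ∈ u, z ≤ a) → G u = G (σ {y ∈ Y | a < y}) := by
    intro u hu hub
    set X : Set ℕ := ↑u ∪ {n ∈ Y | ∀ y ∈ u, y < n} with hX
    have hXY : X ⊆ Y := Set.union_subset
      (fun x hx => Set.mem_biUnion hu hx) (fun n hn => hn.1)
    have hXi : X.Infinite := Set.Infinite.mono Set.subset_union_right (tail_infinite hYinf u)
    have hσX : σ X = u :=
      ((hσspec X hXY hXi).2.2 u hu (self_initSeg_tail u)).symm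
    have hteq : {x ∈ X | a < x} = {y ∈ Y | a < y} := by
      ext x
      simp only [Set.mem_setOf_eq, Set.mem_union, Finset.mem_coe]
      constructor
      · rintro ⟨hx | hx, hax⟩
        · exact absurd (hub x hx) (not_le.2 hax)
        · exact ⟨hx.1, hax⟩
      · rintro ⟨hxY, hax⟩
        exact ⟨Or.inr ⟨hxY, fun y hy => lt_of_le_of_lt (hub y hy) hax⟩, hax⟩
    have hfin : (X ∩ {x | x ≤ a}).Finite := (Set.finite_Iic a).subset (fun x hx => hx.2)
    have := key (X ∩ {x | x ≤ a}).ncard X hXY hXi a (le_refl _)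
    rw [hσX, hteq] at this
    exact this
  have hsa : ∀ z ∈ s, z ≤ a := fun z hz => Finset.le_sup (f := id) (Finset.mem_union_left t hz)
  have hta : ∀ z ∈ t, z ≤ a := fun z hz => Finset.le_sup (f := id) (Finset.mem_union_right s hz)
  rw [hbound s hs hsa, hbound t ht hta]

end SBQO
namespace SBQO

open Classical Set

theorem cast_le_of_cast_le {Q : Type u} {P : Q → Type v} [∀ q, PartialOrder (P q)]
    {a b c : Q} (e1 : a = c) (e2 : b = c) {x : P a} {y : P b}
    (h : e1 ▸ x ≤ e2 ▸ y) : (e1.trans e2.symm) ▸ x ≤ y := by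
  subst e1; subst e2; exact h

/-- A lexicographic sum of bqo posets over a bqo poset is bqo. -/
theorem sumBqo {Q : Type u} [PartialOrder Q] {P : Q → Type v} [∀ q, PartialOrder (P q)]
    (hQ : IsBqoRel ((· ≤ ·) : Q → Q → Prop))
    (hP : ∀ q, IsBqoRel ((· ≤ ·) : P q → P q → Prop)) :
    IsBqoRel (fun x y : Σ q : Q, P q =>
      x.1 < y.1 ∨ ∃ h : x.1 = y.1, h ▸ x.2 ≤ y.2) := by
  intro B hB f
  by_contra hbad
  have hbad' : ∀ s ∈ B, ∀ t ∈ B, ShiftExt s t →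
      ¬ ((f s).1 < (f t).1 ∨ ∃ h : (f s).1 = (f t).1, h ▸ (f s).2 ≤ (f t).2) := by
    intro s hs t ht hst hle
    exact hbad ⟨s, hs, t, ht, hst, hle⟩
  set Fbad : Set (Finset ℕ) := {u | ∃ s t : Finset ℕ, s ∈ B ∧ t ∈ B ∧ ShiftExt s t ∧
    s ∪ t = u ∧ ¬ (f s).1 ≤ (f t).1} with hFbad
  obtain ⟨N, hNM, hNi, hcase⟩ := nashWilliams Fbad (⋃ b ∈ B, ↑b) (barrier_base_infinite hB)
  have hFbad_ne : (∅ : Finset ℕ) ∉ Fbad := by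
    rintro ⟨s, t, _, _, ⟨m, hm, _⟩, hu, _⟩
    have : m ∈ s ∪ t := Finset.mem_union_left t hm
    rw [hu] at this
    exact absurd this (Finset.notMem_empty m)
  rcases hcase with hA | hBcase
  · -- every infinite subset of N has an initial segment in Fbad : contradict bqo of Q
    set D₀ : Set (Finset ℕ) := {u | ↑u ⊆ N ∧ u ∈ Fbad ∧
      ∀ v : Finset ℕ, NatInitSeg v ↑u → v ≠ u → v ∉ Fbad} with hD₀
    have hfront : IsFrontOn D₀ N := by
      refine ⟨fun u hu => hu.1, ?_, ?_⟩
      · intro u hu v hv huv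
        by_contra hne
        exact (hv.2.2 u huv hne) hu.2.1
      · intro X hXN hXi
        have hne : {n : ℕ | ∃ r ∈ Fbad, NatInitSeg r X ∧ r.card = n}.Nonempty := by
          obtain ⟨r, hr, hrX⟩ := hA X hXN hXi
          exact ⟨r.card, r, hr, hrX, rfl⟩
        obtain ⟨u, huF, huX, hucard⟩ := Nat.sInf_mem hne
        refine ⟨u, ⟨huX.1.trans hXN, huF, ?_⟩, huX⟩
        intro v hvu hvne hvF
        have hvX : NatInitSeg v X := initSeg_trans hvu huX
        have hvsub : v ⊆ u := by exact_mod_cast hvu.1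
        have hvcard : v.card < u.card :=
          Finset.card_lt_card (Finset.ssubset_iff_subset_ne.2 ⟨hvsub, hvne⟩)
        have hmemv : v.card ∈ {n : ℕ | ∃ r ∈ Fbad, NatInitSeg r X ∧ r.card = n} :=
          ⟨v, hvF, hvX, rfl⟩
        have hle := Nat.sInf_le hmemv
        omega
    have hD₀ne : (∅ : Finset ℕ) ∉ D₀ := fun h => hFbad_ne h.2.1
    obtain ⟨N', hN'N, hN'i, hbar⟩ := front_to_barrier hfront hNi hD₀ne
    -- witness choice
    have hwit : ∀ u : Finset ℕ, u ∈ Fbad → ∃ st : Finset ℕ × Finset ℕ,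
        st.1 ∈ B ∧ st.2 ∈ B ∧ ShiftExt st.1 st.2 ∧ st.1 ∪ st.2 = u ∧
          ¬ (f st.1).1 ≤ (f st.2).1 := by
      rintro u ⟨s, t, hs, ht, hst, hu, hle⟩
      exact ⟨(s, t), hs, ht, hst, hu, hle⟩
    choose w hw1 hw2 hw3 hw4 hw5 using hwit
    set g : Finset ℕ → Q := fun u =>
      if hu : u ∈ Fbad then (f (w u hu).1).1 else (f ∅).1 with hg
    obtain ⟨u, hu, u', hu', huu', hle⟩ := hQ _ hbar g
    have huF : u ∈ Fbad := hu.1.2.1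
    have hu'F : u' ∈ Fbad := hu'.1.2.1
    have hgu : g u = (f (w u huF).1).1 := by
      simp only [hg]; rw [dif_pos huF]
    have hgu' : g u' = (f (w u' hu'F).1).1 := by
      simp only [hg]; rw [dif_pos hu'F]
    -- the square lemma gives (w u).2 = (w u').1
    have hsq : (w u huF).2 = (w u' hu'F).1 := by
      apply shift_square hB (hw2 u huF) (hw1 u' hu'F) (hw3 u huF) (hw3 u' hu'F)
      rw [hw4 u huF, hw4 u' hu'F]
      exact huu'
    rw [hgu, hgu'] at hle
    rw [← hsq] at hle
    exact hw5 u huF hle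
  · -- all pairs inside N have comparable, hence equal, first components
    have hDbar : IsBarrier {b ∈ B | ↑b ⊆ N} := barrier_restrict hB hNM hNi
    set D : Set (Finset ℕ) := {b ∈ B | ↑b ⊆ N} with hD
    have hpairs : ∀ s ∈ D, ∀ t ∈ D, ShiftExt s t → (f s).1 = (f t).1 := by
      intro s hs t ht hst
      have hle : (f s).1 ≤ (f t).1 := by
        by_contra hnle
        refine hBcase (s ∪ t) ⟨s, t, hs.1, ht.1, hst, rfl, hnle⟩ ?_
        rw [Finset.coe_union]
        exact Set.union_subset hs.2 ht.2
      rcases hle.lt_or_eq with hlt | heq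
      · exact absurd (Or.inl hlt) (hbad' s hs.1 t ht.1 hst)
      · exact heq
    have hconst' := barrier_const hDbar (fun s => (f s).1) hpairs
    obtain ⟨s₀, hs₀⟩ := hDbar.1.nonempty
    have hconst : ∀ s ∈ D, (f s).1 = (f s₀).1 := fun s hs => hconst' s hs s₀ hs₀
    set g : Finset ℕ → P (f s₀).1 := fun s =>
      if hs : s ∈ D then (hconst s hs) ▸ (f s).2
      else (f s₀).2 with hg
    obtain ⟨s, hs, t, ht, hst, hle⟩ := hP (f s₀).1 _ hDbar g
    have hgs : g s = (hconst s hs) ▸ (f s).2 := by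
      simp only [hg]; rw [dif_pos hs]
    have hgt : g t = (hconst t ht) ▸ (f t).2 := by
      simp only [hg]; rw [dif_pos ht]
    rw [hgs, hgt] at hle
    refine hbad ⟨s, hs.1, t, ht.1, hst, Or.inr ⟨(hconst s hs).trans
      (hconst t ht).symm, cast_le_of_cast_le _ _ hle⟩⟩

end SBQO
namespace SBQO

open Classical Set

theorem bqo_pullback {X : Type*} {Y : Type*} (leX : X → X → Prop) (leY : Y → Y → Prop)
    (e : X → Y) (he : ∀ a b, leY (e a) (e b) → leX a b) (hY : IsBqoRel leY) :
    IsBqoRel leX := by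
  intro B hB f
  obtain ⟨s, hs, t, ht, hst, hle⟩ := hY B hB (fun u => e (f u))
  exact ⟨s, hs, t, ht, hst, he _ _ hle⟩

theorem sumWqo {Q : Type u} [PartialOrder Q] {P : Q → Type v} [∀ q, PartialOrder (P q)]
    (hQ : IsWqoRel ((· ≤ ·) : Q → Q → Prop))
    (hP : ∀ q, IsWqoRel ((· ≤ ·) : P q → P q → Prop)) :
    IsWqoRel (fun x y : Σ q : Q, P q =>
      x.1 < y.1 ∨ ∃ h : x.1 = y.1, h ▸ x.2 ≤ y.2) := by
  intro p
  have hpwo : (Set.univ : Set Q).PartiallyWellOrderedOn (· ≤ ·) := fun g => hQ (fun n => (g n).1)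
  obtain ⟨g, hg⟩ := hpwo.exists_monotone_subseq (f := fun n => (p n).1) (fun n => Set.mem_univ _)
  by_cases hstrict : ∃ i j : ℕ, i < j ∧ (p (g i)).1 < (p (g j)).1
  · obtain ⟨i, j, hij, hlt⟩ := hstrict
    exact ⟨g i, g j, g.strictMono hij, Or.inl hlt⟩
  · push_neg at hstrict
    have heq : ∀ n : ℕ, (p (g n)).1 = (p (g 0)).1 := by
      intro n
      rcases Nat.eq_zero_or_pos n with rfl | hn
      · rfl
      · exact (((hg 0 n (Nat.zero_le n)).lt_or_eq).resolve_left (hstrict 0 n hn)).symm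
    obtain ⟨i, j, hij, hle⟩ := hP (p (g 0)).1 (fun n => (heq n) ▸ (p (g n)).2)
    exact ⟨g i, g j, g.strictMono hij,
      Or.inr ⟨(heq i).trans (heq j).symm, cast_le_of_cast_le _ _ hle⟩⟩

end SBQO

theorem stmt_7' {Q : Type u} [PartialOrder Q] {P : Q → Type v} [∀ q, PartialOrder (P q)]
    (hQ : IsSigmaBqoRel ((· ≤ ·) : Q → Q → Prop))
    (hP : ∀ q, IsSigmaBqoRel ((· ≤ ·) : P q → P q → Prop)) :
    IsSigmaBqoRel (fun x y : Σ q : Q, P q =>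
      x.1 < y.1 ∨ ∃ h : x.1 = y.1, h ▸ x.2 ≤ y.2) := by
  obtain ⟨hQw, SQ, hSQcov, hSQbqo⟩ := hQ
  have hPw : ∀ q, IsWqoRel ((· ≤ ·) : P q → P q → Prop) := fun q => (hP q).1
  choose SP hSPcov hSPbqo using fun q => (hP q).2
  refine ⟨SBQO.sumWqo hQw hPw,
    fun n => {x : Σ q : Q, P q | x.1 ∈ SQ n.unpair.1 ∧ x.2 ∈ SP x.1 n.unpair.2}, ?_, ?_⟩
  · apply Set.eq_univ_of_forall
    intro x
    have h1 : x.1 ∈ ⋃ m, SQ m := by rw [hSQcov]; trivial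
    have h2 : x.2 ∈ ⋃ m, SP x.1 m := by rw [hSPcov x.1]; trivial
    obtain ⟨a, ha⟩ := Set.mem_iUnion.1 h1
    obtain ⟨b, hb⟩ := Set.mem_iUnion.1 h2
    refine Set.mem_iUnion.2 ⟨Nat.pair a b, ?_⟩
    simp only [Set.mem_setOf_eq, Nat.unpair_pair]
    exact ⟨ha, hb⟩
  · intro n
    set a := n.unpair.1 with hadef
    set b := n.unpair.2 with hbdef
    -- the piece as a lexicographic sum of subtypes
    have hQa : IsBqoRel ((· ≤ ·) : (SQ a) → (SQ a) → Prop) := hSQbqo a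
    have hPa : ∀ q' : SQ a, IsBqoRel
        ((· ≤ ·) : {p : P q'.1 // p ∈ SP q'.1 b} → {p : P q'.1 // p ∈ SP q'.1 b} → Prop) :=
      fun q' => hSPbqo q'.1 b
    have hsum := SBQO.sumBqo hQa hPa
    refine SBQO.bqo_pullback _ _
      (fun x => (⟨⟨x.1.1, x.2.1⟩, ⟨x.1.2, x.2.2⟩⟩ :
        Σ q' : SQ a, {p : P q'.1 // p ∈ SP q'.1 b})) ?_ hsum
    rintro ⟨⟨q1, p1⟩, hx1, hx2⟩ ⟨⟨q2, p2⟩, hy1, hy2⟩ hle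
    rcases hle with hlt | ⟨h, hle⟩
    · exact Or.inl (Subtype.coe_lt_coe.2 hlt)
    · have hv : q1 = q2 := congrArg Subtype.val h
      subst hv
      refine Or.inr ⟨rfl, ?_⟩
      have hrfl : h = rfl := rfl
      rw [hrfl] at hle
      exact hle


/-- A lexicographic sum of `σ`-bqo posets over a `σ`-bqo poset is `σ`-bqo. -/
theorem stmt_7 {Q : Type u} [PartialOrder Q] {P : Q → Type v} [∀ q, PartialOrder (P q)]
    (hQ : IsSigmaBqoRel ((· ≤ ·) : Q → Q → Prop))
    (hP : ∀ q, IsSigmaBqoRel ((· ≤ ·) : P q → P q → Prop)) :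
    IsSigmaBqoRel (fun x y : Σ q : Q, P q =>
      x.1 < y.1 ∨ ∃ h : x.1 = y.1, h ▸ x.2 ≤ y.2) := by
  exact stmt_7' hQ hP
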